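/- Let ρ > 1. For all sufficiently large d, for all y'', z'' ∈ ℝ^{d-2} with (1+ρ) - 7/d ≤ ‖y''‖ ≤ (1+ρ) - 6/d, √2(1+ρ) - 7/d ≤ ‖z''‖ ≤ √2(1+ρ) - 6/d, and ⟨z'', y''⟩ ≥ ‖y''‖·‖z''‖·(√2/2), and for all y', z' ∈ ℝ² with ‖z' - y'‖² ≤ 2/d, one has ‖z'-y'‖² + ‖z''-y''‖² < (1+ρ)². -/

import Mathlib

open Filter

set_option maxHeartbeats 1000000 in
theorem cone_annulus_dist_lt (ρ : ℝ) (hρ : 1 < ρ) :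
    ∀ᶠ d : ℕ in atTop,
      ∀ y'' z'' : EuclideanSpace ℝ (Fin (d - 2)),
        (1 + ρ) - 7 / (d : ℝ) ≤ ‖y''‖ → ‖y''‖ ≤ (1 + ρ) - 6 / (d : ℝ) →
        Real.sqrt 2 * (1 + ρ) - 7 / (d : ℝ) ≤ ‖z''‖ →
        ‖z''‖ ≤ Real.sqrt 2 * (1 + ρ) - 6 / (d : ℝ) →
        (inner ℝ z'' y'' : ℝ) ≥ ‖y''‖ * ‖z''‖ * (Real.sqrt 2 / 2) →
        ∀ y' z' : EuclideanSpace ℝ (Fin 2), ‖z' - y'‖ ^ 2 ≤ 2 / (d : ℝ) →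
          ‖z' - y'‖ ^ 2 + ‖z'' - y''‖ ^ 2 < (1 + ρ) ^ 2 := by
  filter_upwards [eventually_ge_atTop 10] with d hd
  intro y'' z'' hy1 hy2 hz1 hz2 hI y' z' hy'
  have hdR : (10 : ℝ) ≤ (d : ℝ) := by exact_mod_cast hd
  have hdpos : (0 : ℝ) < d := by linarith
  set s := Real.sqrt 2 with hs
  have hs2 : s ^ 2 = 2 := Real.sq_sqrt (by norm_num)
  have hs1 : (1.4 : ℝ) ≤ s := by nlinarith [Real.sqrt_nonneg 2]
  have hs15 : s ≤ 1.5 := by nlinarith [Real.sqrt_nonneg 2]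
  have hA : (2 : ℝ) < 1 + ρ := by linarith
  have hnsq : ‖z'' - y''‖ ^ 2 = ‖z''‖ ^ 2 - 2 * (inner ℝ z'' y'' : ℝ) + ‖y''‖ ^ 2 :=
    norm_sub_sq_real z'' y''
  have hya : (0 : ℝ) ≤ (1 + ρ) - 7 / (d : ℝ) := by
    have : 7 / (d : ℝ) ≤ 7 / 10 := by
      apply div_le_div_of_nonneg_left (by norm_num) (by norm_num) hdR
    linarith
  have hza : (0 : ℝ) ≤ s * (1 + ρ) - 7 / (d : ℝ) := by
    have : 7 / (d : ℝ) ≤ 7 / 10 := by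
      apply div_le_div_of_nonneg_left (by norm_num) (by norm_num) hdR
    nlinarith
  -- inner ≥ s/2 * lower bounds product
  have hIlb : (inner ℝ z'' y'' : ℝ) ≥ ((1 + ρ) - 7 / d) * (s * (1 + ρ) - 7 / d) * (s / 2) := by
    have h1 : ‖y''‖ * ‖z''‖ ≥ ((1 + ρ) - 7 / d) * (s * (1 + ρ) - 7 / d) :=
      mul_le_mul hy1 hz1 hza (le_trans hya hy1)
    nlinarith
  have hub : ‖z'' - y''‖ ^ 2 ≤ (s * (1 + ρ) - 6 / d) ^ 2 + ((1 + ρ) - 6 / d) ^ 2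
      - 2 * (((1 + ρ) - 7 / d) * (s * (1 + ρ) - 7 / d) * (s / 2)) := by
    rw [hnsq]
    have hy2' : ‖y''‖ ^ 2 ≤ ((1 + ρ) - 6 / d) ^ 2 :=
      pow_le_pow_left₀ (norm_nonneg _) hy2 2
    have hz2' : ‖z''‖ ^ 2 ≤ (s * (1 + ρ) - 6 / d) ^ 2 :=
      pow_le_pow_left₀ (norm_nonneg _) hz2 2
    linarith
  have key : (2 : ℝ) / d + (s * (1 + ρ) - 6 / d) ^ 2 + ((1 + ρ) - 6 / d) ^ 2
      - 2 * (((1 + ρ) - 7 / d) * (s * (1 + ρ) - 7 / d) * (s / 2)) < (1 + ρ) ^ 2 := by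
    have hinv : (0 : ℝ) < 1 / d := by positivity
    have h1d : 1 / (d : ℝ) ≤ 1 / 10 := by
      apply div_le_div_of_nonneg_left (by norm_num) (by norm_num) hdR
    have e1 : (6 : ℝ) / d = 6 * (1 / d) := by ring
    have e2 : (7 : ℝ) / d = 7 * (1 / d) := by ring
    have e3 : (2 : ℝ) / d = 2 * (1 / d) := by ring
    rw [e1, e2, e3]
    set u := (1 : ℝ) / d with hu
    have hid : 2 * u + (s * (1 + ρ) - 6 * u) ^ 2 + ((1 + ρ) - 6 * u) ^ 2
        - 2 * (((1 + ρ) - 7 * u) * (s * (1 + ρ) - 7 * u) * (s / 2))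
        = (1 + ρ) ^ 2 + u * (2 - 5 * s * (1 + ρ) + 2 * (1 + ρ) + (72 - 49 * s) * u) := by
      linear_combination (7 * (1 + ρ) * u) * hs2
    rw [hid]
    have h72 : (72 - 49 * s) * u ≤ 3.4 * u := by nlinarith
    have hmain : 2 - 5 * s * (1 + ρ) + 2 * (1 + ρ) + (72 - 49 * s) * u < 0 := by
      nlinarith
    nlinarith [mul_neg_of_pos_of_neg hinv hmain]
  linarith
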